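/- Let H be a real Hilbert space, f : H → ℝ ∪ {+∞} a proper, convex and lower semicontinuous function, and g : H → ℝ a convex Fréchet differentiable function whose gradient ∇g is β-cocoercive for some β > 0, i.e., ⟨x − y, ∇g(x) − ∇g(y)⟩ ≥ β ‖∇g(x) − ∇g(y)‖² for all x, y ∈ H. Suppose argmin(f+g) ≠ ∅. Let (γ_k)_{k≥0} be positive reals with inf_{k≥0} γ_k > 0, and let (y_k)_{k≥0} be a sequence in H converging weakly to some x ∈ H (i.e., ⟨y_k, z⟩ → ⟨x, z⟩ for all z ∈ H) such that y_k − prox_{γ_k f}(y_k − γ_k ∇g(y_k)) → 0 strongly as k → +∞. Then x ∈ argmin(f+g). -/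

import Mathlib

open scoped RealInnerProductSpace

open Filter Set in
lemma grad_ineq {H : Type*} [NormedAddCommGroup H] [InnerProductSpace ℝ H] [CompleteSpace H]
    (g : H → ℝ) (hgconv : ConvexOn ℝ Set.univ g) (g' : H → H)
    (hg' : ∀ z, HasGradientAt g (g' z) z) (p w : H) :
    g p + ⟪g' p, w - p⟫ ≤ g w := by
  set v := w - p with hv
  have hψ : HasDerivAt (fun t : ℝ => p + t • v) v 0 := by
    simpa using ((hasDerivAt_id (0:ℝ)).smul_const v).const_add p
  have hφ : HasDerivAt (fun t : ℝ => g (p + t • v)) ⟪g' p, v⟫ 0 := by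
    have h1 := (hg' p).hasFDerivAt
    have h2 := (show HasFDerivAt g ((InnerProductSpace.toDual ℝ H) (g' p)) (p + (0:ℝ) • v) by
      simpa using h1).comp_hasDerivAt (0:ℝ) hψ
    simpa [InnerProductSpace.toDual, Function.comp_def] using h2
  have hslope : Tendsto (slope (fun t : ℝ => g (p + t • v)) 0) (nhdsWithin 0 (Set.Ioi 0))
      (nhds ⟪g' p, v⟫) := by
    exact (hasDerivAt_iff_tendsto_slope.1 hφ).mono_left
      (nhdsWithin_mono 0 (fun t ht => ne_of_gt ht))
  have hbound : ∀ᶠ t in nhdsWithin (0:ℝ) (Set.Ioi 0),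
      slope (fun t : ℝ => g (p + t • v)) 0 t ≤ g w - g p := by
    filter_upwards [Ioc_mem_nhdsGT one_pos] with t ht
    have hc := hgconv.2 (Set.mem_univ w) (Set.mem_univ p) (le_of_lt ht.1)
      (by linarith [ht.2] : (0:ℝ) ≤ 1 - t) (by ring)
    have hcomb : p + t • v = t • w + (1 - t) • p := by
      rw [hv]; module
    rw [slope_def_field]
    rw [sub_zero, div_le_iff₀ ht.1, hcomb]
    simp only [smul_eq_mul] at hc
    simp only [zero_smul, add_zero]
    nlinarith [hc]
  have := le_of_tendsto hslope hbound
  linarith [real_inner_comm (g' p) v]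

open Filter Set in
lemma weak_lsc_bound {H : Type*} [NormedAddCommGroup H] [InnerProductSpace ℝ H] [CompleteSpace H]
    (h : H → EReal)
    (hEconv : Convex ℝ {q : H × ℝ | h q.1 ≤ (q.2 : EReal)})
    (hEclosed : IsClosed {q : H × ℝ | h q.1 ≤ (q.2 : EReal)})
    (p : ℕ → H) (x : H)
    (hweak : ∀ z : H, Tendsto (fun k => ⟪p k, z⟫) atTop (nhds ⟪x, z⟫))
    (M : ℝ) (hM : ∀ k, h (p k) ≤ (M : EReal)) : h x ≤ (M : EReal) := by
  by_contra hx
  have hxE : ((x, M) : H × ℝ) ∉ {q : H × ℝ | h q.1 ≤ (q.2 : EReal)} := hx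
  obtain ⟨φ, u, hφx, hφE⟩ := geometric_hahn_banach_point_closed hEconv hEclosed hxE
  set v := (InnerProductSpace.toDual ℝ H).symm (φ.comp (ContinuousLinearMap.inl ℝ H ℝ)) with hv
  have hvw : ∀ w : H, φ (w, 0) = ⟪w, v⟫ := by
    intro w
    have : (InnerProductSpace.toDual ℝ H) v = φ.comp (ContinuousLinearMap.inl ℝ H ℝ) := by
      rw [hv, LinearIsometryEquiv.apply_symm_apply]
    have h2 := congrArg (fun ψ : H →L[ℝ] ℝ => ψ w) this
    simp only [InnerProductSpace.toDual_apply_apply, ContinuousLinearMap.comp_apply,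
      ContinuousLinearMap.inl_apply] at h2
    rw [real_inner_comm] at h2
    exact h2.symm
  have hdec : ∀ (w : H) (s : ℝ), φ (w, s) = ⟪w, v⟫ + s * φ (0, 1) := by
    intro w s
    have : ((w, s) : H × ℝ) = (w, (0:ℝ)) + s • ((0:H), (1:ℝ)) := by
      simp [Prod.ext_iff]
    rw [this, map_add, map_smul, hvw, smul_eq_mul]
  have hk : ∀ k, u < ⟪p k, v⟫ + M * φ (0, 1) := by
    intro k
    have := hφE (p k, M) (hM k)
    rwa [hdec] at this
  have hlim : Tendsto (fun k => ⟪p k, v⟫ + M * φ (0, 1)) atTop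
      (nhds (⟪x, v⟫ + M * φ (0, 1))) := (hweak v).add_const _
  have hle : u ≤ ⟪x, v⟫ + M * φ (0, 1) :=
    ge_of_tendsto' hlim (fun k => (hk k).le)
  have : φ (x, M) = ⟪x, v⟫ + M * φ (0, 1) := hdec x M
  linarith [hφx, this ▸ hφx]

open Filter Set in
lemma prox_subgrad {H : Type*} [NormedAddCommGroup H] [InnerProductSpace ℝ H]
    (f : H → EReal) (hreal : ∀ z : H, f z ≠ ⊥)
    (hconv : ∀ z w : H, ∀ t : ℝ, 0 ≤ t → t ≤ 1 →
      f (t • z + (1 - t) • w) ≤ (t : EReal) * f z + ((1 - t : ℝ) : EReal) * f w)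
    (γk : ℝ) (hγk : 0 < γk) (yk gk pk : H)
    (hp : ∀ w : H,
      f pk + ((1 / (2 * γk) * ‖pk - (yk - γk • gk)‖ ^ 2 : ℝ) : EReal) ≤
      f w + ((1 / (2 * γk) * ‖w - (yk - γk • gk)‖ ^ 2 : ℝ) : EReal))
    (hfpk : f pk ≠ ⊤) (w : H) (hfw : f w ≠ ⊤) :
    (f pk).toReal + ⟪γk⁻¹ • (yk - pk) - gk, w - pk⟫ ≤ (f w).toReal := by
  set u := yk - γk • gk with hu
  set A := (f pk).toReal with hA
  set B := (f w).toReal with hB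
  set κ := 1 / (2 * γk) with hκ
  have hκpos : 0 < κ := by positivity
  have hfpkA : f pk = (A : EReal) := (EReal.coe_toReal hfpk (hreal pk)).symm
  have hfwB : f w = (B : EReal) := (EReal.coe_toReal hfw (hreal w)).symm
  have key : ∀ t : ℝ, 0 < t → t ≤ 1 →
      A ≤ B + γk⁻¹ * ⟪pk - u, w - pk⟫ + κ * t * ‖w - pk‖ ^ 2 := by
    intro t ht0 ht1
    have hcomb : pk + t • (w - pk) = t • w + (1 - t) • pk := by module
    have h1 := hp (pk + t • (w - pk))
    have h2 := hconv w pk t ht0.le ht1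
    rw [← hcomb] at h2
    rw [hfwB, hfpkA] at h2
    rw [show ((t : EReal) * (B : EReal) + ((1 - t : ℝ) : EReal) * (A : EReal))
        = ((t * B + (1 - t) * A : ℝ) : EReal) by
      rw [← EReal.coe_mul, ← EReal.coe_mul, ← EReal.coe_add]] at h2
    have h3 : f pk + ((κ * ‖pk - u‖ ^ 2 : ℝ) : EReal) ≤
        ((t * B + (1 - t) * A : ℝ) : EReal)
          + ((κ * ‖pk + t • (w - pk) - u‖ ^ 2 : ℝ) : EReal) :=
      le_trans h1 (add_le_add_left h2 _)
    rw [hfpkA, ← EReal.coe_add, ← EReal.coe_add, EReal.coe_le_coe_iff] at h3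
    have hexp : ‖pk + t • (w - pk) - u‖ ^ 2
        = ‖pk - u‖ ^ 2 + 2 * (t * ⟪pk - u, w - pk⟫) + t ^ 2 * ‖w - pk‖ ^ 2 := by
      have : pk + t • (w - pk) - u = (pk - u) + t • (w - pk) := by abel
      rw [this, norm_add_sq_real, real_inner_smul_right, norm_smul, Real.norm_eq_abs]
      rw [mul_pow, sq_abs]
    rw [hexp] at h3
    have h2κ : 2 * κ = γk⁻¹ := by
      rw [hκ]; field_simp
    -- from h3: t*A ≤ t*B + 2κ t ⟪..⟫ + κ t² ‖..‖²
    have h4 : t * A ≤ t * B + (2 * κ) * t * ⟪pk - u, w - pk⟫ + κ * t ^ 2 * ‖w - pk‖ ^ 2 := by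
      nlinarith [h3]
    rw [h2κ] at h4
    have h5 := (mul_le_mul_iff_of_pos_left ht0).1 (by nlinarith [h4] :
      t * A ≤ t * (B + γk⁻¹ * ⟪pk - u, w - pk⟫ + κ * t * ‖w - pk‖ ^ 2))
    exact h5
  have main : A ≤ B + γk⁻¹ * ⟪pk - u, w - pk⟫ := by
    apply le_of_forall_pos_le_add
    intro ε hε
    set K := ‖w - pk‖ ^ 2 with hK
    have hK0 : 0 ≤ K := by positivity
    set t := min 1 (ε / (κ * K + 1)) with htdef
    have ht0 : 0 < t := lt_min one_pos (by positivity)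
    have ht1 : t ≤ 1 := min_le_left _ _
    have h6 := key t ht0 ht1
    have h7 : κ * t * K ≤ ε := by
      have htle : t ≤ ε / (κ * K + 1) := min_le_right _ _
      have h8 : κ * K + 1 > 0 := by positivity
      rw [le_div_iff₀ h8] at htle
      nlinarith
    linarith
  have hinner : ⟪γk⁻¹ • (yk - pk) - gk, w - pk⟫ = -(γk⁻¹ * ⟪pk - u, w - pk⟫) := by
    have : γk⁻¹ • (yk - pk) - gk = -(γk⁻¹ • (pk - u)) := by
      rw [hu]
      rw [show pk - (yk - γk • gk) = (pk - yk) + γk • gk by abel]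
      rw [smul_add, smul_smul, inv_mul_cancel₀ (ne_of_gt hγk), one_smul]
      rw [show yk - pk = -(pk - yk) by abel, smul_neg]
      abel
    rw [this, inner_neg_left, real_inner_smul_left]
  rw [hinner]
  linarith

open Filter Set in
/-- the proximal-gradient family fulfils the asymptotic fixed-point
condition: weak limits of sequences with vanishing residuals minimize `f + g`. -/
theorem stmt_12 {H : Type*} [NormedAddCommGroup H] [InnerProductSpace ℝ H] [CompleteSpace H]
    (f : H → EReal)
    (hproper : ∃ z : H, f z ≠ ⊤) (hreal : ∀ z : H, f z ≠ ⊥)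
    (hconv : ∀ z w : H, ∀ t : ℝ, 0 ≤ t → t ≤ 1 →
      f (t • z + (1 - t) • w) ≤ (t : EReal) * f z + ((1 - t : ℝ) : EReal) * f w)
    (hlsc : LowerSemicontinuous f)
    (g : H → ℝ) (hgconv : ConvexOn ℝ Set.univ g)
    (g' : H → H) (hg' : ∀ z : H, HasGradientAt g (g' z) z)
    (bet : ℝ) (hbet : 0 < bet)
    (hcoco : ∀ z w : H, ⟪z - w, g' z - g' w⟫ ≥ bet * ‖g' z - g' w‖ ^ 2)
    (hargmin : ∃ y : H, ∀ z : H, f y + ((g y : ℝ) : EReal) ≤ f z + ((g z : ℝ) : EReal))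
    (γ : ℕ → ℝ) (hγpos : ∀ k, 0 < γ k)
    (hγinf : ∃ c : ℝ, 0 < c ∧ ∀ k, c ≤ γ k)
    (y : ℕ → H) (x : H)
    (hweak : ∀ z : H, Filter.Tendsto (fun k => ⟪y k, z⟫) Filter.atTop (nhds ⟪x, z⟫))
    (p : ℕ → H)
    -- `p k` is the proximal point `prox_{γ_k f}(y_k - γ_k ∇g(y_k))`:
    (hp : ∀ k, ∀ w : H,
      f (p k) + ((1 / (2 * γ k) * ‖p k - (y k - γ k • g' (y k))‖ ^ 2 : ℝ) : EReal) ≤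
      f w + ((1 / (2 * γ k) * ‖w - (y k - γ k • g' (y k))‖ ^ 2 : ℝ) : EReal))
    (hres : Filter.Tendsto (fun k => y k - p k) Filter.atTop (nhds 0)) :
    ∀ z : H, f x + ((g x : ℝ) : EReal) ≤ f z + ((g z : ℝ) : EReal) := by
  obtain ⟨c, hc, hcγ⟩ := hγinf
  obtain ⟨z₀, hz₀⟩ := hproper
  have hgcont : Continuous g :=
    continuous_iff_continuousAt.2 fun z => ((hg' z).hasFDerivAt).continuousAt
  -- f (p k) is finite
  have hpktop : ∀ k, f (p k) ≠ ⊤ := by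
    intro k hktop
    have h1 := hp k z₀
    rw [hktop, EReal.top_add_coe] at h1
    exact ((EReal.add_lt_top hz₀ (EReal.coe_ne_top _)).ne) (top_le_iff.1 h1)
  have hsub : ∀ k (w : H), f w ≠ ⊤ →
      (f (p k)).toReal + ⟪(γ k)⁻¹ • (y k - p k) - g' (y k), w - p k⟫ ≤ (f w).toReal :=
    fun k w hw => prox_subgrad f hreal hconv (γ k) (hγpos k) (y k) (g' (y k)) (p k)
      (hp k) (hpktop k) w hw
  -- Lipschitz bound for g'
  have hlip : ∀ z w : H, ‖g' z - g' w‖ ≤ bet⁻¹ * ‖z - w‖ := by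
    intro z w
    have h1 := hcoco z w
    have h2 := real_inner_le_norm (z - w) (g' z - g' w)
    rcases eq_or_lt_of_le (norm_nonneg (g' z - g' w)) with h3 | h3
    · rw [← h3]; positivity
    · have h4 : bet * ‖g' z - g' w‖ ≤ ‖z - w‖ := by nlinarith
      calc ‖g' z - g' w‖ = bet⁻¹ * (bet * ‖g' z - g' w‖) := by
            field_simp
        _ ≤ bet⁻¹ * ‖z - w‖ := by
            apply mul_le_mul_of_nonneg_left h4 (by positivity)
  have hrn : Tendsto (fun k => ‖y k - p k‖) atTop (nhds 0) := by
    simpa using hres.norm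
  -- bounds
  have hyb : ∃ C, ∀ k, ‖y k‖ ≤ C := by
    have hb : ∀ w : H, ∃ C, ∀ k, ‖(InnerProductSpace.toDual ℝ H (y k)) w‖ ≤ C := by
      intro w
      have h1 : Tendsto (fun k => ‖⟪y k, w⟫‖) atTop (nhds ‖⟪x, w⟫‖) := (hweak w).norm
      obtain ⟨C, hC⟩ := h1.isBoundedUnder_le.bddAbove_range
      exact ⟨C, fun k => by
        simpa [InnerProductSpace.toDual_apply_apply] using hC (Set.mem_range_self k)⟩
    obtain ⟨C, hC⟩ := banach_steinhaus hb
    exact ⟨C, fun k => by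
      simpa [LinearIsometryEquiv.norm_map] using hC k⟩
  obtain ⟨Cy, hCy⟩ := hyb
  have hrb : ∃ C, ∀ k, ‖y k - p k‖ ≤ C := by
    obtain ⟨C, hC⟩ := hrn.isBoundedUnder_le.bddAbove_range
    exact ⟨C, fun k => hC (Set.mem_range_self k)⟩
  obtain ⟨Cr, hCr⟩ := hrb
  have hpb : ∀ k, ‖p k‖ ≤ Cy + Cr := by
    intro k
    calc ‖p k‖ = ‖y k - (y k - p k)‖ := by rw [sub_sub_cancel]
      _ ≤ ‖y k‖ + ‖y k - p k‖ := norm_sub_le _ _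
      _ ≤ Cy + Cr := add_le_add (hCy k) (hCr k)
  -- the vanishing subgradient-type sequence
  set v : ℕ → H := fun k => (γ k)⁻¹ • (y k - p k) + (g' (p k) - g' (y k)) with hv
  have hvz : Tendsto v atTop (nhds 0) := by
    apply squeeze_zero_norm (a := fun k => (c⁻¹ + bet⁻¹) * ‖y k - p k‖)
    · intro k
      have h1 : ‖(γ k)⁻¹ • (y k - p k)‖ ≤ c⁻¹ * ‖y k - p k‖ := by
        rw [norm_smul, Real.norm_eq_abs, abs_of_pos (inv_pos.2 (hγpos k))]
        apply mul_le_mul_of_nonneg_right _ (norm_nonneg _)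
        exact inv_anti₀ hc (hcγ k)
      have h2 : ‖g' (p k) - g' (y k)‖ ≤ bet⁻¹ * ‖y k - p k‖ := by
        rw [show y k - p k = -(p k - y k) by abel, norm_neg]
        exact hlip (p k) (y k)
      calc ‖v k‖ ≤ ‖(γ k)⁻¹ • (y k - p k)‖ + ‖g' (p k) - g' (y k)‖ := norm_add_le _ _
        _ ≤ (c⁻¹ + bet⁻¹) * ‖y k - p k‖ := by linarith
    · simpa using hrn.const_mul (c⁻¹ + bet⁻¹)
  -- weak convergence of p
  have hpweak : ∀ z : H, Tendsto (fun k => ⟪p k, z⟫) atTop (nhds ⟪x, z⟫) := by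
    intro z
    have h1 : Tendsto (fun k => ⟪y k - p k, z⟫) atTop (nhds (0:ℝ)) := by
      have := Filter.Tendsto.inner (𝕜 := ℝ) hres (tendsto_const_nhds (x := z))
      simpa using this
    have h2 := (hweak z).sub h1
    simpa [inner_sub_left] using h2
  -- the combined function
  set h : H → EReal := fun w => f w + ((g w : ℝ) : EReal) with hh
  have hcoeh : ∀ k, h (p k) = (((f (p k)).toReal + g (p k) : ℝ) : EReal) := by
    intro k
    rw [hh]
    simp only
    rw [EReal.coe_add, EReal.coe_toReal (hpktop k) (hreal (p k))]
  -- epigraph of h is convex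
  have hEconv : Convex ℝ {q : H × ℝ | h q.1 ≤ (q.2 : EReal)} := by
    rintro ⟨w1, s1⟩ hq1 ⟨w2, s2⟩ hq2 a b ha hb hab
    simp only [Set.mem_setOf_eq] at hq1 hq2 ⊢
    have hfw1top : f w1 ≠ ⊤ := by
      intro htop; rw [hh] at hq1; simp only [htop, EReal.top_add_coe] at hq1
      exact (EReal.coe_ne_top s1) (top_le_iff.1 hq1)
    have hfw2top : f w2 ≠ ⊤ := by
      intro htop; rw [hh] at hq2; simp only [htop, EReal.top_add_coe] at hq2
      exact (EReal.coe_ne_top s2) (top_le_iff.1 hq2)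
    set a1 := (f w1).toReal with ha1
    set a2 := (f w2).toReal with ha2
    have hc1 : f w1 = (a1 : EReal) := (EReal.coe_toReal hfw1top (hreal w1)).symm
    have hc2 : f w2 = (a2 : EReal) := (EReal.coe_toReal hfw2top (hreal w2)).symm
    have hr1 : a1 + g w1 ≤ s1 := by
      rw [hh] at hq1; simp only [hc1, ← EReal.coe_add, EReal.coe_le_coe_iff] at hq1
      exact hq1
    have hr2 : a2 + g w2 ≤ s2 := by
      rw [hh] at hq2; simp only [hc2, ← EReal.coe_add, EReal.coe_le_coe_iff] at hq2
      exact hq2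
    have hbeq : b = 1 - a := by linarith
    have hf3 : f (a • w1 + b • w2) ≤ ((a * a1 + b * a2 : ℝ) : EReal) := by
      have hthis := hconv w1 w2 a ha (by linarith)
      rw [hc1, hc2] at hthis
      calc f (a • w1 + b • w2)
          ≤ (a : EReal) * (a1 : EReal) + ((1 - a : ℝ) : EReal) * (a2 : EReal) := by
            rw [hbeq]; exact hthis
        _ = ((a * a1 + (1 - a) * a2 : ℝ) : EReal) := by
            rw [← EReal.coe_mul, ← EReal.coe_mul, ← EReal.coe_add]
        _ = ((a * a1 + b * a2 : ℝ) : EReal) := by rw [hbeq]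
    have hg3 : g (a • w1 + b • w2) ≤ a * g w1 + b * g w2 := by
      simpa [smul_eq_mul] using hgconv.2 (Set.mem_univ w1) (Set.mem_univ w2) ha hb hab
    show h ((a • (w1, s1) + b • (w2, s2)).1) ≤ (((a • (w1, s1) + b • (w2, s2)).2 : ℝ) : EReal)
    have hfst : (a • ((w1, s1) : H × ℝ) + b • (w2, s2)).1 = a • w1 + b • w2 := rfl
    have hsnd : (a • ((w1, s1) : H × ℝ) + b • (w2, s2)).2 = a * s1 + b * s2 := rfl
    rw [hfst, hsnd, hh]
    simp only
    calc f (a • w1 + b • w2) + ((g (a • w1 + b • w2) : ℝ) : EReal)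
        ≤ ((a * a1 + b * a2 : ℝ) : EReal) + ((g (a • w1 + b • w2) : ℝ) : EReal) :=
          add_le_add_left hf3 _
      _ = ((a * a1 + b * a2 + g (a • w1 + b • w2) : ℝ) : EReal) := by rw [← EReal.coe_add]
      _ ≤ ((a * s1 + b * s2 : ℝ) : EReal) := by
          rw [EReal.coe_le_coe_iff]
          nlinarith [hg3, hr1, hr2]
  -- epigraph of h is closed
  have hEclosed : IsClosed {q : H × ℝ | h q.1 ≤ (q.2 : EReal)} := by
    rw [← isOpen_compl_iff, isOpen_iff_mem_nhds]
    rintro ⟨w, s⟩ hq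
    simp only [Set.mem_compl_iff, Set.mem_setOf_eq, not_le] at hq
    -- choose cf, cg with cf < f w, cg < g w, s < cf + cg
    obtain ⟨cf, cg, hcf, hcg, hscfg⟩ :
        ∃ cf cg : ℝ, (cf : EReal) < f w ∧ cg < g w ∧ s < cf + cg := by
      by_cases htop : f w = ⊤
      · exact ⟨s - g w + 2, g w - 1, by rw [htop]; exact EReal.coe_lt_top _,
          by linarith, by linarith⟩
      · set fw := (f w).toReal with hfw
        have hcw : f w = (fw : EReal) := (EReal.coe_toReal htop (hreal w)).symm
        have hsr : s < fw + g w := by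
          have hq' : (s : EReal) < f w + ((g w : ℝ) : EReal) := hq
          rw [hcw, ← EReal.coe_add, EReal.coe_lt_coe_iff] at hq'
          exact hq'
        refine ⟨fw - (fw + g w - s)/3, g w - (fw + g w - s)/3, ?_, by linarith, by linarith⟩
        rw [hcw, EReal.coe_lt_coe_iff]
        linarith
    have evf : ∀ᶠ w' in nhds w, (cf : EReal) < f w' := hlsc w (cf : EReal) hcf
    have evg : ∀ᶠ w' in nhds w, cg < g w' :=
      (hgcont.tendsto w).eventually (eventually_gt_nhds hcg)
    have evs : ∀ᶠ s' in nhds s, s' < cf + cg := eventually_lt_nhds hscfg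
    have evall := (evf.and evg).prodMk_nhds evs
    apply Filter.mem_of_superset evall
    rintro ⟨w', s'⟩ ⟨⟨h1, h2⟩, h3⟩
    simp only [Set.mem_compl_iff, Set.mem_setOf_eq, not_le]
    calc ((s' : ℝ) : EReal) < ((cf + cg : ℝ) : EReal) := EReal.coe_lt_coe_iff.2 h3
      _ = (cf : EReal) + (cg : EReal) := EReal.coe_add _ _
      _ < f w' + ((g w' : ℝ) : EReal) :=
          EReal.add_lt_add h1 (EReal.coe_lt_coe_iff.2 h2)
  -- main argument
  intro z
  by_cases hfz : f z = ⊤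
  · rw [hfz, EReal.top_add_coe]; exact le_top
  · set fz := (f z).toReal with hfzdef
    have hcoefz : f z = (fz : EReal) := (EReal.coe_toReal hfz (hreal z)).symm
    have hkey : ∀ k, (f (p k)).toReal + g (p k) ≤ fz + g z - ⟪v k, z - p k⟫ := by
      intro k
      have h1 := hsub k z hfz
      have h2 := grad_ineq g hgconv g' hg' (p k) z
      have h3 : ⟪v k, z - p k⟫ =
          ⟪(γ k)⁻¹ • (y k - p k) - g' (y k), z - p k⟫ + ⟪g' (p k), z - p k⟫ := by
        rw [← inner_add_left]
        congr 1
        rw [hv]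
        abel
      rw [h3]
      linarith
    have herr : Tendsto (fun k => ⟪v k, z - p k⟫) atTop (nhds 0) := by
      apply squeeze_zero_norm (a := fun k => ‖v k‖ * (‖z‖ + (Cy + Cr)))
      · intro k
        calc ‖⟪v k, z - p k⟫‖ ≤ ‖v k‖ * ‖z - p k‖ := norm_inner_le_norm _ _
          _ ≤ ‖v k‖ * (‖z‖ + (Cy + Cr)) := by
              apply mul_le_mul_of_nonneg_left _ (norm_nonneg _)
              calc ‖z - p k‖ ≤ ‖z‖ + ‖p k‖ := norm_sub_le _ _
                _ ≤ ‖z‖ + (Cy + Cr) := by linarith [hpb k]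
      · simpa using hvz.norm.mul_const (‖z‖ + (Cy + Cr))
    have hfinal : ∀ ε : ℝ, 0 < ε → h x ≤ ((fz + g z + ε : ℝ) : EReal) := by
      intro ε hε
      obtain ⟨K, hK⟩ := Metric.tendsto_atTop.1 herr ε hε
      apply weak_lsc_bound h hEconv hEclosed (fun k => p (k + K)) x
        (fun z' => (hpweak z').comp (tendsto_add_atTop_nat K))
      intro k
      have h1 := hkey (k + K)
      have h2 := hK (k + K) (Nat.le_add_left K k)
      rw [Real.dist_eq, sub_zero] at h2
      have h4 : -⟪v (k + K), z - p (k + K)⟫ < ε := by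
        cases abs_lt.1 h2 with
        | intro hl hr => linarith
      rw [hcoeh (k + K)]
      exact EReal.coe_le_coe_iff.2 (by linarith)
    have hxtop : h x ≠ ⊤ := by
      intro htop
      have := hfinal 1 one_pos
      rw [htop] at this
      exact (EReal.coe_ne_top _) (top_le_iff.1 this)
    have hxbot : h x ≠ ⊥ := by
      rw [hh]
      simp only
      intro hbot
      rcases EReal.add_eq_bot_iff.1 hbot with h | h
      · exact hreal x h
      · exact (EReal.coe_ne_bot _) h
    have hcoehx : h x = (((h x).toReal : ℝ) : EReal) := (EReal.coe_toReal hxtop hxbot).symm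
    have hxle : (h x).toReal ≤ fz + g z := by
      apply le_of_forall_pos_le_add
      intro ε hε
      have := hfinal ε hε
      rw [hcoehx, EReal.coe_le_coe_iff] at this
      linarith
    show h x ≤ f z + ((g z : ℝ) : EReal)
    rw [hcoefz, ← EReal.coe_add, hcoehx, EReal.coe_le_coe_iff]
    exact hxle
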